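/- Let S ⊆ M_{m,n}(ℝ) be a linear subspace and P_S the orthogonal projection onto vec(S) ⊆ ℝ^{mn}. Then d(S)² = μ_max(P_S), where d(S) := max{ ‖Y‖_op : Y ∈ S, ‖Y‖_F ≤ 1 }. -/

import Mathlib

open Matrix Complex

noncomputable section

def vKron {α β : Type*} (v : α → ℝ) (w : β → ℝ) : α × β → ℝ := fun p => v p.1 * w p.2

def cKron {α β : Type*} (v : α → ℂ) (w : β → ℂ) : α × β → ℂ := fun p => v p.1 * w p.2

/-- Partial transpose on the second tensor factor. -/
def pt {α β : Type*} (B : Matrix (α × β) (α × β) ℝ) : Matrix (α × β) (α × β) ℝ :=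
  Matrix.of fun p q => B (p.1, q.2) (q.1, p.2)

/-- Values of the quadratic form of `B` on real unit product vectors. -/
def prodSet {α β : Type*} [Fintype α] [Fintype β] (B : Matrix (α × β) (α × β) ℝ) : Set ℝ :=
  {r | ∃ (v : α → ℝ) (w : β → ℝ), v ⬝ᵥ v = 1 ∧ w ⬝ᵥ w = 1 ∧
    r = vKron v w ⬝ᵥ B.mulVec (vKron v w)}

/-- The numerical range of a complex matrix. -/
def numRange {N : Type*} [Fintype N] (A : Matrix N N ℂ) : Set ℂ :=
  {z | ∃ x : N → ℂ, star x ⬝ᵥ x = 1 ∧ z = star x ⬝ᵥ A.mulVec x}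

/-- `W^{1+i}(B) = {c ∈ ℝ : c(1+i) ∈ W(B + iB^Γ)}`. -/
def W1i {α β : Type*} [Fintype α] [Fintype β] (B : Matrix (α × β) (α × β) ℝ) : Set ℝ :=
  {c | (c : ℂ) * (1 + Complex.I) ∈
    numRange (B.map (fun t => (t : ℂ)) + Complex.I • (pt B).map (fun t => (t : ℂ)))}

def frobNorm {a b : ℕ} (Y : Matrix (Fin a) (Fin b) ℝ) : ℝ :=
  Real.sqrt (∑ i, ∑ j, (Y i j) ^ 2)

/-- The operator (largest singular value) norm, as the sup of `|wᵀ Y v|` over unit vectors. -/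
def opNorm' {a b : ℕ} (Y : Matrix (Fin a) (Fin b) ℝ) : ℝ :=
  sSup {r | ∃ (w : Fin a → ℝ) (v : Fin b → ℝ), w ⬝ᵥ w = 1 ∧ v ⬝ᵥ v = 1 ∧
    r = |w ⬝ᵥ Y.mulVec v|}

/-- `d(S) = max { ‖Y‖_op : Y ∈ S, ‖Y‖_F ≤ 1 }`. -/
def dSub {a b : ℕ} (S : Submodule ℝ (Matrix (Fin a) (Fin b) ℝ)) : ℝ :=
  sSup {r | ∃ Y ∈ S, frobNorm Y ≤ 1 ∧ r = opNorm' Y}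

/-- Column-by-column vectorization. -/
def vec {a b : ℕ} (Y : Matrix (Fin a) (Fin b) ℝ) : Fin b × Fin a → ℝ := fun p => Y p.2 p.1

section helpers
variable {ι : Type*} [Fintype ι]

lemma dot_self_nonneg' (x : ι → ℝ) : 0 ≤ x ⬝ᵥ x :=
  Finset.sum_nonneg fun _ _ => mul_self_nonneg _

lemma dot_sq_le' (x y : ι → ℝ) : (x ⬝ᵥ y)^2 ≤ (x ⬝ᵥ x) * (y ⬝ᵥ y) := by
  simpa [dotProduct, sq] using Finset.sum_mul_sq_le_sq_mul_sq Finset.univ x y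

lemma dot_sym (P : Matrix ι ι ℝ) (hsym : P.IsSymm) (x y : ι → ℝ) :
    x ⬝ᵥ P.mulVec y = (P.mulVec x) ⬝ᵥ y := by
  rw [dotProduct_mulVec, ← vecMul_transpose, hsym.eq]
end helpers

lemma vKron_dot_vKron {α β : Type*} [Fintype α] [Fintype β] (v v' : α → ℝ) (w w' : β → ℝ) :
    vKron v w ⬝ᵥ vKron v' w' = (v ⬝ᵥ v') * (w ⬝ᵥ w') := by
  simp only [vKron, dotProduct, Fintype.sum_prod_type, Finset.sum_mul, Finset.mul_sum]
  rw [Finset.sum_comm]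
  apply Finset.sum_congr rfl; intro i _; apply Finset.sum_congr rfl; intro j _; ring

lemma vec_dot_vKron {a b : ℕ} (Y : Matrix (Fin a) (Fin b) ℝ) (v : Fin b → ℝ) (w : Fin a → ℝ) :
    _root_.vec Y ⬝ᵥ vKron v w = w ⬝ᵥ Y.mulVec v := by
  simp only [_root_.vec, vKron, dotProduct, mulVec, Fintype.sum_prod_type, Finset.mul_sum]
  rw [Finset.sum_comm]
  apply Finset.sum_congr rfl; intro i _; apply Finset.sum_congr rfl; intro j _; ring

lemma frobNorm_eq {a b : ℕ} (Y : Matrix (Fin a) (Fin b) ℝ) :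
    frobNorm Y = Real.sqrt (_root_.vec Y ⬝ᵥ _root_.vec Y) := by
  simp only [frobNorm, _root_.vec, dotProduct, Fintype.sum_prod_type, sq]
  rw [Finset.sum_comm]

lemma frobNorm_sq {a b : ℕ} (Y : Matrix (Fin a) (Fin b) ℝ) :
    frobNorm Y ^ 2 = _root_.vec Y ⬝ᵥ _root_.vec Y := by
  rw [frobNorm_eq, Real.sq_sqrt (dot_self_nonneg' _)]

lemma frobNorm_nonneg {a b : ℕ} (Y : Matrix (Fin a) (Fin b) ℝ) : 0 ≤ frobNorm Y :=
  Real.sqrt_nonneg _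

lemma abs_dot_le_frob {a b : ℕ} (Y : Matrix (Fin a) (Fin b) ℝ) (w : Fin a → ℝ) (v : Fin b → ℝ)
    (hw : w ⬝ᵥ w = 1) (hv : v ⬝ᵥ v = 1) : |w ⬝ᵥ Y.mulVec v| ≤ frobNorm Y := by
  rw [← vec_dot_vKron, frobNorm_eq, ← Real.sqrt_sq_eq_abs]
  apply Real.sqrt_le_sqrt
  calc (_root_.vec Y ⬝ᵥ vKron v w) ^ 2 ≤ (_root_.vec Y ⬝ᵥ _root_.vec Y) * (vKron v w ⬝ᵥ vKron v w) := dot_sq_le' _ _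
    _ = _root_.vec Y ⬝ᵥ _root_.vec Y := by rw [vKron_dot_vKron, hv, hw]; ring

lemma opNorm'_le_frobNorm {a b : ℕ} (Y : Matrix (Fin a) (Fin b) ℝ) :
    opNorm' Y ≤ frobNorm Y := by
  apply Real.sSup_le _ (frobNorm_nonneg Y)
  rintro r ⟨w, v, hw, hv, rfl⟩
  exact abs_dot_le_frob Y w v hw hv

lemma opNorm'_nonneg {a b : ℕ} (Y : Matrix (Fin a) (Fin b) ℝ) : 0 ≤ opNorm' Y :=
  Real.sSup_nonneg (by rintro r ⟨w, v, hw, hv, rfl⟩; exact abs_nonneg _)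

lemma abs_le_opNorm' {a b : ℕ} (Y : Matrix (Fin a) (Fin b) ℝ) (w : Fin a → ℝ) (v : Fin b → ℝ)
    (hw : w ⬝ᵥ w = 1) (hv : v ⬝ᵥ v = 1) : |w ⬝ᵥ Y.mulVec v| ≤ opNorm' Y := by
  apply le_csSup
  · exact ⟨frobNorm Y, by rintro r ⟨w', v', hw', hv', rfl⟩; exact abs_dot_le_frob Y w' v' hw' hv'⟩
  · exact ⟨w, v, hw, hv, rfl⟩

theorem stmt11 {m n : ℕ} (S : Submodule ℝ (Matrix (Fin m) (Fin n) ℝ))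
    (P : Matrix (Fin n × Fin m) (Fin n × Fin m) ℝ)
    (hsym : P.IsSymm) (hidem : P * P = P)
    (hrange : ∀ x : Fin n × Fin m → ℝ, ∃ Y ∈ S, P.mulVec x = _root_.vec Y)
    (hfix : ∀ Y ∈ S, P.mulVec (_root_.vec Y) = _root_.vec Y) :
    (dSub S) ^ 2 = sSup (prodSet P) := by
  have hPdot : ∀ x : Fin n × Fin m → ℝ,
      (P.mulVec x) ⬝ᵥ (P.mulVec x) = x ⬝ᵥ P.mulVec x := by
    intro x
    rw [← dot_sym P hsym x (P.mulVec x), mulVec_mulVec, hidem]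
  have hprod_nonneg : ∀ r ∈ prodSet P, 0 ≤ r := by
    rintro r ⟨v, w, hv, hw, rfl⟩
    rw [← hPdot]; exact dot_self_nonneg' _
  have hs0 : 0 ≤ sSup (prodSet P) := Real.sSup_nonneg hprod_nonneg
  have hPbdd : BddAbove (prodSet P) := by
    refine ⟨1, ?_⟩
    rintro r ⟨v, w, hv, hw, rfl⟩
    have hx1 : vKron v w ⬝ᵥ vKron v w = 1 := by rw [vKron_dot_vKron, hv, hw]; ring
    have h2 := dot_sq_le' (vKron v w) (P.mulVec (vKron v w))
    have h6 : 0 ≤ vKron v w ⬝ᵥ P.mulVec (vKron v w) := by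
      rw [← hPdot]; exact dot_self_nonneg' _
    have h7 := hPdot (vKron v w)
    nlinarith
  have hd0 : 0 ≤ dSub S :=
    Real.sSup_nonneg (by rintro r ⟨Y, hY, hfrob, rfl⟩; exact opNorm'_nonneg Y)
  have hAbdd : BddAbove {r | ∃ Y ∈ S, frobNorm Y ≤ 1 ∧ r = opNorm' Y} := by
    refine ⟨1, ?_⟩
    rintro r ⟨Y, hY, hfrob, rfl⟩
    exact (opNorm'_le_frobNorm Y).trans hfrob
  apply le_antisymm
  · -- dSub S ^ 2 ≤ sSup (prodSet P)
    have hdle : dSub S ≤ Real.sqrt (sSup (prodSet P)) := by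
      apply Real.sSup_le _ (Real.sqrt_nonneg _)
      rintro r ⟨Y, hY, hfrob, rfl⟩
      apply Real.sSup_le _ (Real.sqrt_nonneg _)
      rintro r ⟨w, v, hw, hv, rfl⟩
      rw [← Real.sqrt_sq_eq_abs]
      apply Real.sqrt_le_sqrt
      have h1 : _root_.vec Y ⬝ᵥ P.mulVec (vKron v w) = w ⬝ᵥ Y.mulVec v := by
        rw [dot_sym P hsym, hfix Y hY, vec_dot_vKron]
      have h2 := dot_sq_le' (_root_.vec Y) (P.mulVec (vKron v w))
      have h3 : _root_.vec Y ⬝ᵥ _root_.vec Y ≤ 1 := by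
        rw [← frobNorm_sq]; nlinarith [frobNorm_nonneg Y]
      have h5 : vKron v w ⬝ᵥ P.mulVec (vKron v w) ≤ sSup (prodSet P) :=
        le_csSup hPbdd ⟨v, w, hv, hw, rfl⟩
      have h6 : 0 ≤ vKron v w ⬝ᵥ P.mulVec (vKron v w) := by
        rw [← hPdot]; exact dot_self_nonneg' _
      have h8 : _root_.vec Y ⬝ᵥ _root_.vec Y * (P.mulVec (vKron v w) ⬝ᵥ P.mulVec (vKron v w))
          ≤ vKron v w ⬝ᵥ P.mulVec (vKron v w) := by
        rw [hPdot]
        calc _root_.vec Y ⬝ᵥ _root_.vec Y * (vKron v w ⬝ᵥ P.mulVec (vKron v w))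
            ≤ 1 * (vKron v w ⬝ᵥ P.mulVec (vKron v w)) := mul_le_mul_of_nonneg_right h3 h6
          _ = _ := one_mul _
      rw [← h1]
      exact h2.trans (h8.trans h5)
    calc dSub S ^ 2 ≤ Real.sqrt (sSup (prodSet P)) ^ 2 := by
          exact pow_le_pow_left₀ hd0 hdle 2
      _ = sSup (prodSet P) := Real.sq_sqrt hs0
  · -- sSup (prodSet P) ≤ dSub S ^ 2
    apply Real.sSup_le _ (sq_nonneg (dSub S))
    rintro c ⟨v, w, hv, hw, rfl⟩
    obtain ⟨Y, hY, hPxY⟩ := hrange (vKron v w)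
    have hceq : vKron v w ⬝ᵥ P.mulVec (vKron v w) = _root_.vec Y ⬝ᵥ _root_.vec Y := by
      rw [← hPdot, hPxY]
    have hxc : vKron v w ⬝ᵥ P.mulVec (vKron v w) = w ⬝ᵥ Y.mulVec v := by
      rw [dot_sym P hsym, hPxY, vec_dot_vKron]
    rcases le_or_gt (vKron v w ⬝ᵥ P.mulVec (vKron v w)) 0 with hc | hc
    · exact hc.trans (sq_nonneg _)
    · set t := frobNorm Y with ht
      have ht2 : t ^ 2 = vKron v w ⬝ᵥ P.mulVec (vKron v w) := by
        rw [ht, frobNorm_sq, hceq]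
      have ht0 : 0 < t := by
        rcases (frobNorm_nonneg Y).lt_or_eq with h | h
        · exact h
        · exfalso
          have h0 : t = 0 := by rw [ht, ← h]
          rw [h0] at ht2; simp at ht2; linarith
      have hZS : t⁻¹ • Y ∈ S := S.smul_mem _ hY
      have hvecZ : _root_.vec (t⁻¹ • Y) = t⁻¹ • _root_.vec Y := by
        funext p; simp [_root_.vec, Matrix.smul_apply, smul_eq_mul]
      have hfrobZ : frobNorm (t⁻¹ • Y) = 1 := by
        rw [frobNorm_eq, hvecZ, smul_dotProduct, dotProduct_smul, smul_eq_mul, smul_eq_mul,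
          ← hceq, ← ht2]
        rw [show t⁻¹ * (t⁻¹ * t ^ 2) = 1 by field_simp]
        exact Real.sqrt_one
      have hZval : w ⬝ᵥ (t⁻¹ • Y).mulVec v = t := by
        have : _root_.vec (t⁻¹ • Y) ⬝ᵥ vKron v w = t⁻¹ * (_root_.vec Y ⬝ᵥ vKron v w) := by
          rw [hvecZ, smul_dotProduct, smul_eq_mul]
        rw [← vec_dot_vKron, this, vec_dot_vKron, ← hxc, ← ht2]
        field_simp
      have hopZ : t ≤ opNorm' (t⁻¹ • Y) := by
        have := abs_le_opNorm' (t⁻¹ • Y) w v hw hv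
        rw [hZval, abs_of_pos ht0] at this
        exact this
      have hopd : opNorm' (t⁻¹ • Y) ≤ dSub S :=
        le_csSup hAbdd ⟨t⁻¹ • Y, hZS, le_of_eq hfrobZ, rfl⟩
      have : t ≤ dSub S := hopZ.trans hopd
      rw [← ht2]
      exact pow_le_pow_left₀ ht0.le this 2
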